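/- Let A be a commutative Noetherian ring and I = (f_1, …, f_n) an ideal of A. Then the I-adic completion of A is isomorphic as an A-algebra to the quotient A[[ρ_1, …, ρ_n]] / (f_1 - ρ_1, …, f_n - ρ_n) of the formal power series ring in n variables over A. -/

import Mathlib

open MvPowerSeries Finset

namespace Stmt4Aux

noncomputable section
variable {A : Type*} [CommRing A] {n : ℕ}

def bb (n K : ℕ) : Fin n →₀ ℕ := Finsupp.equivFunOnFinite.symm fun _ => K

lemma le_bb_iff {K : ℕ} {d : Fin n →₀ ℕ} : d ≤ bb n K ↔ ∀ i, d i ≤ K := by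
  simp [bb, Finsupp.le_def]

lemma bb_mono {K L : ℕ} (h : K ≤ L) : bb n K ≤ bb n L := by
  rw [le_bb_iff]; intro i; simp [bb]; omega

def deg (d : Fin n →₀ ℕ) : ℕ := ∑ i, d i

lemma deg_add (u v : Fin n →₀ ℕ) : deg (u + v) = deg u + deg v := by
  simp [deg, Finset.sum_add_distrib]

lemma deg_mono {u v : Fin n →₀ ℕ} (h : u ≤ v) : deg u ≤ deg v :=
  Finset.sum_le_sum fun i _ => Finsupp.le_def.mp h i

lemma deg_le_of_le_bb {K : ℕ} {d : Fin n →₀ ℕ} (h : d ≤ bb n K) : deg d ≤ n * K := by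
  rw [le_bb_iff] at h
  calc deg d ≤ ∑ _i : Fin n, K := Finset.sum_le_sum fun i _ => h i
  _ = n * K := by simp [Finset.sum_const, mul_comm]

lemma lt_deg_of_not_le_bb {K : ℕ} {d : Fin n →₀ ℕ} (h : ¬ d ≤ bb n K) : K < deg d := by
  rw [le_bb_iff] at h
  push_neg at h
  obtain ⟨i, hi⟩ := h
  calc K < d i := hi
  _ ≤ deg d := Finset.single_le_sum (fun _ _ => Nat.zero_le _) (Finset.mem_univ i)

variable (f : Fin n → A)

def mval (d : Fin n →₀ ℕ) : A := ∏ i, f i ^ d i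

lemma mval_zero : mval f 0 = 1 := by simp [mval]

lemma mval_add (u v : Fin n →₀ ℕ) : mval f (u + v) = mval f u * mval f v := by
  simp [mval, pow_add, Finset.prod_mul_distrib]

lemma finsuppProd_eq_mval (d : Fin n →₀ ℕ) : (d.prod fun i k => f i ^ k) = mval f d :=
  Finsupp.prod_pow d f

lemma mval_mem_deg {K : ℕ} {d : Fin n →₀ ℕ} (h : K ≤ deg d) :
    mval f d ∈ Ideal.span (Set.range f) ^ K := by
  refine SetLike.le_def.mp (Ideal.pow_le_pow_right h) ?_
  have : Ideal.span (Set.range f) ^ deg d = ∏ i, Ideal.span (Set.range f) ^ d i := by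
    rw [Finset.prod_pow_eq_pow_sum]; rfl
  rw [mval, this]
  exact Ideal.prod_mem_prod fun i _ =>
    Ideal.pow_mem_pow (Ideal.subset_span (Set.mem_range_self i)) _

lemma mval_mem_of_not_le_bb {K : ℕ} {d : Fin n →₀ ℕ} (h : ¬ d ≤ bb n K) :
    mval f d ∈ Ideal.span (Set.range f) ^ K :=
  mval_mem_deg f (lt_deg_of_not_le_bb h).le

def pe (K : ℕ) (g : MvPowerSeries (Fin n) A) : A :=
  ∑ d ∈ Finset.Iic (bb n K), coeff d g * mval f d


lemma pe_add (K : ℕ) (g h : MvPowerSeries (Fin n) A) :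
    pe f K (g + h) = pe f K g + pe f K h := by
  simp [pe, map_add, add_mul, Finset.sum_add_distrib]

lemma pe_one (K : ℕ) : pe f K (1 : MvPowerSeries (Fin n) A) = 1 := by
  rw [pe, Finset.sum_eq_single (0 : Fin n →₀ ℕ)]
  · simp [MvPowerSeries.coeff_one, mval_zero]
  · intro b _ hb; simp [MvPowerSeries.coeff_one, hb]
  · intro h; exact absurd (Finset.mem_Iic.mpr bot_le) h

lemma pe_C (K : ℕ) (a : A) : pe f K (C (σ := Fin n) (R := A) a) = a := by
  rw [pe, Finset.sum_eq_single (0 : Fin n →₀ ℕ)]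
  · simp [MvPowerSeries.coeff_C, mval_zero]
  · intro b _ hb; simp [MvPowerSeries.coeff_C, hb]
  · intro h; exact absurd (Finset.mem_Iic.mpr bot_le) h

lemma pe_congr {K : ℕ} {g h : MvPowerSeries (Fin n) A}
    (hc : ∀ d : Fin n →₀ ℕ, d ≤ bb n K → coeff d g = coeff d h) :
    pe f K g = pe f K h :=
  Finset.sum_congr rfl fun d hd => by rw [hc d (Finset.mem_Iic.mp hd)]

lemma pe_transition {m K : ℕ} (h : m ≤ K) (g : MvPowerSeries (Fin n) A) :
    pe f K g - pe f m g ∈ Ideal.span (Set.range f) ^ m := by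
  classical
  have hsub : Finset.Iic (bb n m) ⊆ Finset.Iic (bb n K) := Finset.Iic_subset_Iic.mpr (bb_mono h)
  rw [pe, pe, ← Finset.sum_sdiff hsub, add_sub_cancel_right]
  refine Ideal.sum_mem _ fun d hd => ?_
  have hdm : ¬ d ≤ bb n m := by
    have := (Finset.mem_sdiff.mp hd).2
    simpa using this
  exact Ideal.mul_mem_left _ _ (mval_mem_of_not_le_bb f hdm)

lemma prod_support_eq_mval (d : Fin n →₀ ℕ) : (∏ i ∈ d.support, f i ^ d i) = mval f d :=
  Finset.prod_subset (Finset.subset_univ _)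
    (fun i _ hi => by simp [Finsupp.notMem_support_iff.mp hi])

lemma aeval_eq_sum (p : MvPolynomial (Fin n) A) :
    MvPolynomial.aeval f p = ∑ d ∈ p.support, MvPolynomial.coeff d p * mval f d := by
  rw [MvPolynomial.aeval_def, MvPolynomial.eval₂_eq]
  exact Finset.sum_congr rfl fun d _ => by rw [prod_support_eq_mval]; simp

lemma pe_coe_sub_aeval_mem (K : ℕ) (p : MvPolynomial (Fin n) A) :
    pe f K (↑p : MvPowerSeries (Fin n) A) - MvPolynomial.aeval f p
      ∈ Ideal.span (Set.range f) ^ K := by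
  classical
  set t : (Fin n →₀ ℕ) → A := fun d => MvPolynomial.coeff d p * mval f d with ht
  set U : Finset (Fin n →₀ ℕ) := Finset.Iic (bb n K) ∪ p.support with hU
  have h1 : pe f K (↑p : MvPowerSeries (Fin n) A) = ∑ d ∈ Finset.Iic (bb n K), t d :=
    Finset.sum_congr rfl fun d _ => by rw [ht, MvPolynomial.coeff_coe]
  have h2 : MvPolynomial.aeval f p = ∑ d ∈ U, t d := by
    rw [aeval_eq_sum]
    refine Finset.sum_subset Finset.subset_union_right fun d _ hd => ?_
    simp [ht, MvPolynomial.notMem_support_iff.mp hd]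
  rw [h1, h2, ← Finset.sum_sdiff (Finset.subset_union_left (s₂ := p.support))]
  rw [sub_add_eq_sub_sub_swap, sub_self, zero_sub]
  refine neg_mem (Ideal.sum_mem _ fun d hd => ?_)
  have : ¬ d ≤ bb n K := by
    have := (Finset.mem_sdiff.mp hd).2
    simpa using this
  exact Ideal.mul_mem_left _ _ (mval_mem_of_not_le_bb f this)

lemma pe_mul (K : ℕ) (g h : MvPowerSeries (Fin n) A) :
    pe f K (g * h) - pe f K g * pe f K h ∈ Ideal.span (Set.range f) ^ K := by
  classical
  set D := Finset.Iic (bb n K) with hD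
  set t : (Fin n →₀ ℕ) × (Fin n →₀ ℕ) → A :=
    fun p => coeff p.1 g * coeff p.2 h * mval f (p.1 + p.2) with htt
  set G := (D ×ˢ D).filter (fun p => p.1 + p.2 ∈ D) with hG
  have hRHS : pe f K g * pe f K h = ∑ p ∈ D ×ˢ D, t p := by
    rw [pe, pe, Finset.sum_mul_sum, Finset.sum_product]
    exact Finset.sum_congr rfl fun u _ => Finset.sum_congr rfl fun v _ => by
      rw [htt]; simp only [mval_add]; ring
  have hLHS : pe f K (g * h) = ∑ p ∈ G, t p := by
    rw [pe]
    have e1 : ∀ d ∈ D, coeff d (g * h) * mval f d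
        = ∑ p ∈ Finset.HasAntidiagonal.antidiagonal d, t p := by
      intro d _
      rw [MvPowerSeries.coeff_mul, Finset.sum_mul]
      refine Finset.sum_congr rfl fun p hp => ?_
      have hpd : p.1 + p.2 = d := Finset.HasAntidiagonal.mem_antidiagonal.mp hp
      simp only [htt, hpd]
    rw [Finset.sum_congr rfl e1, Finset.sum_sigma']
    refine Finset.sum_nbij' (fun x => x.2) (fun p => ⟨p.1 + p.2, p⟩) ?_ ?_ ?_ ?_ ?_
    · rintro ⟨d, p⟩ hx
      rw [Finset.mem_sigma] at hx
      obtain ⟨hd, hp⟩ := hx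
      have hpd : p.1 + p.2 = d := Finset.HasAntidiagonal.mem_antidiagonal.mp hp
      rw [hG, Finset.mem_filter, Finset.mem_product]
      have hdle : d ≤ bb n K := Finset.mem_Iic.mp hd
      refine ⟨⟨Finset.mem_Iic.mpr (le_trans ?_ hdle), Finset.mem_Iic.mpr (le_trans ?_ hdle)⟩, ?_⟩
      · rw [← hpd]; exact le_add_right le_rfl
      · rw [← hpd]; exact le_add_left le_rfl
      · rw [hpd]; exact hd
    · intro p hp
      rw [hG, Finset.mem_filter] at hp
      rw [Finset.mem_sigma]
      exact ⟨hp.2, Finset.HasAntidiagonal.mem_antidiagonal.mpr rfl⟩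
    · rintro ⟨d, p⟩ hx
      rw [Finset.mem_sigma] at hx
      have hpd : p.1 + p.2 = d := Finset.HasAntidiagonal.mem_antidiagonal.mp hx.2
      exact Sigma.ext hpd (by simp)
    · intro p _; rfl
    · intro x _; rfl
  have hsub : G ⊆ D ×ˢ D := by rw [hG]; exact Finset.filter_subset _ _
  rw [hLHS, hRHS, ← Finset.sum_sdiff hsub, sub_add_eq_sub_sub_swap, sub_self, zero_sub]
  refine neg_mem (Ideal.sum_mem _ fun p hp => ?_)
  have : ¬ p.1 + p.2 ≤ bb n K := by
    have h2 := (Finset.mem_sdiff.mp hp).2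
    rw [hG] at h2
    intro hle
    exact h2 (Finset.mem_filter.mpr ⟨(Finset.mem_sdiff.mp hp).1, Finset.mem_Iic.mpr hle⟩)
  exact Ideal.mul_mem_left _ _ (mval_mem_of_not_le_bb f this)


lemma smul_top_eq (K : ℕ) :
    ((Ideal.span (Set.range f)) ^ K • ⊤ : Ideal A) = Ideal.span (Set.range f) ^ K := by
  ext x; simp

lemma pe_zero_s (K : ℕ) : pe f K (0 : MvPowerSeries (Fin n) A) = 0 := by
  simp [pe]

/-- The evaluation algebra homomorphism from the power series ring to the adic completion. -/
def psiHom : MvPowerSeries (Fin n) A →ₐ[A] AdicCompletion (Ideal.span (Set.range f)) A where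
  toFun g := ⟨fun K => Submodule.Quotient.mk (pe f K g), by
    intro m K hmK
    show (Submodule.Quotient.mk (pe f K g) : A ⧸ (Ideal.span (Set.range f) ^ m • ⊤ : Submodule A A)) = Submodule.Quotient.mk (pe f m g)
    rw [Submodule.Quotient.eq]
    have := pe_transition f hmK g
    rwa [← smul_top_eq f m] at this⟩
  map_one' := Subtype.ext <| funext fun K => by
    simp only [pe_one]; rfl
  map_mul' g h := Subtype.ext <| funext fun K => by
    have : (Submodule.Quotient.mk (pe f K g) : A ⧸ ((Ideal.span (Set.range f)) ^ K • ⊤ : Ideal A))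
        * Submodule.Quotient.mk (pe f K h) = Submodule.Quotient.mk (pe f K g * pe f K h) := rfl
    show (Submodule.Quotient.mk (pe f K (g * h))
        : A ⧸ ((Ideal.span (Set.range f)) ^ K • ⊤ : Ideal A))
      = Submodule.Quotient.mk (pe f K g) * Submodule.Quotient.mk (pe f K h)
    rw [this, Submodule.Quotient.eq, smul_top_eq]
    exact pe_mul f K g h
  map_zero' := Subtype.ext <| funext fun K => by
    simp only [pe_zero_s]; rfl
  map_add' g h := Subtype.ext <| funext fun K => by
    simp only [pe_add]; rfl
  commutes' r := Subtype.ext <| funext fun K => by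
    show (Submodule.Quotient.mk (pe f K (algebraMap A (MvPowerSeries (Fin n) A) r))
        : A ⧸ ((Ideal.span (Set.range f)) ^ K • ⊤ : Ideal A))
      = (algebraMap A (AdicCompletion (Ideal.span (Set.range f)) A) r).val K
    have h1 : algebraMap A (MvPowerSeries (Fin n) A) r = C (σ := Fin n) (R := A) r := rfl
    rw [h1, pe_C]
    rfl

lemma psiHom_val (g : MvPowerSeries (Fin n) A) (K : ℕ) :
    (psiHom f g).val K = Submodule.Quotient.mk (pe f K g) := rfl


-- (a) representation of elements of I^K by polynomials of large support degree
lemma exists_poly_rep {K : ℕ} {c : A} (hc : c ∈ Ideal.span (Set.range f) ^ K) :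
    ∃ p : MvPolynomial (Fin n) A,
      MvPolynomial.aeval f p = c ∧ ∀ d ∈ p.support, K ≤ deg d := by
  classical
  induction K generalizing c with
  | zero =>
    exact ⟨MvPolynomial.C c, by simp, fun d _ => Nat.zero_le _⟩
  | succ K ih =>
    rw [pow_succ] at hc
    refine Submodule.mul_induction_on hc ?_ ?_
    · intro x hx y hy
      obtain ⟨p₁, hp₁, hd₁⟩ := ih hx
      obtain ⟨r, hr⟩ := Submodule.mem_span_range_iff_exists_fun A |>.mp hy
      set q : MvPolynomial (Fin n) A :=
        ∑ i, MvPolynomial.monomial (Finsupp.single i 1) (r i) with hq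
      have haq : MvPolynomial.aeval f q = y := by
        rw [hq, map_sum, ← hr]
        refine Finset.sum_congr rfl fun i _ => ?_
        rw [MvPolynomial.aeval_monomial]
        simp [Finsupp.prod_single_index]
      have hdq : ∀ d ∈ q.support, 1 ≤ deg d := by
        intro d hd
        have := MvPolynomial.support_sum hd
        rw [Finset.mem_biUnion] at this
        obtain ⟨i, _, hdi⟩ := this
        have := MvPolynomial.support_monomial_subset hdi
        rw [Finset.mem_singleton] at this
        subst this
        simp [deg, Finsupp.single_apply]
      refine ⟨p₁ * q, by rw [map_mul, hp₁, haq], ?_⟩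
      intro d hd
      have := MvPolynomial.support_mul _ _ hd
      rw [Finset.mem_add] at this
      obtain ⟨u, hu, v, hv, rfl⟩ := this
      rw [deg_add]
      have := hd₁ u hu
      have := hdq v hv
      omega
    · intro x y hx hy
      obtain ⟨p₁, hp₁, hd₁⟩ := hx
      obtain ⟨p₂, hp₂, hd₂⟩ := hy
      refine ⟨p₁ + p₂, by rw [map_add, hp₁, hp₂], ?_⟩
      intro d hd
      rcases Finset.mem_union.mp (MvPolynomial.support_add hd) with h | h
      · exact hd₁ d h
      · exact hd₂ d h

-- (b) coefficientwise infinite sums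
def seqSum (s : ℕ → MvPowerSeries (Fin n) A) : MvPowerSeries (Fin n) A :=
  fun d => ∑ k ∈ Finset.range (deg d + 1), coeff d (s k)

lemma coeff_seqSum (s : ℕ → MvPowerSeries (Fin n) A) (d : Fin n →₀ ℕ) :
    coeff d (seqSum s) = ∑ k ∈ Finset.range (deg d + 1), coeff d (s k) := rfl

lemma coeff_seqSum_eq_partial (s : ℕ → MvPowerSeries (Fin n) A)
    (hs : ∀ k (d : Fin n →₀ ℕ), deg d < k → coeff d (s k) = 0)
    {d : Fin n →₀ ℕ} {T : ℕ} (hT : deg d < T) :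
    coeff d (seqSum s) = coeff d (∑ k ∈ Finset.range T, s k) := by
  rw [coeff_seqSum, map_sum]
  refine Finset.sum_subset (Finset.range_subset_range.mpr hT) fun k _ hk => ?_
  rw [Finset.mem_range, not_lt] at hk
  exact hs k d (by omega)


lemma deg_eq_zero_iff {d : Fin n →₀ ℕ} : deg d = 0 ↔ d = 0 := by
  constructor
  · intro h
    ext i
    have := Finset.sum_eq_zero_iff.mp h i (Finset.mem_univ i)
    simpa using this
  · rintro rfl; simp [deg]

lemma deg_single (i : Fin n) : deg (Finsupp.single i 1) = 1 := by
  simp [deg, Finsupp.single_apply]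

lemma coord_le_deg (d : Fin n →₀ ℕ) (i : Fin n) : d i ≤ deg d :=
  Finset.single_le_sum (fun _ _ => Nat.zero_le _) (Finset.mem_univ i)

/-- The ideal of power series whose coefficients vanish below total degree `K`. -/
def vanishIdeal (A : Type*) [CommRing A] (n K : ℕ) : Ideal (MvPowerSeries (Fin n) A) where
  carrier := {x | ∀ d : Fin n →₀ ℕ, deg d < K → coeff d x = 0}
  add_mem' := fun {a b} ha hb d hd => by
    rw [map_add, ha d hd, hb d hd, add_zero]
  zero_mem' := fun d _ => by simp
  smul_mem' := fun r x hx d hd => by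
    classical
    show coeff d (r * x) = 0
    rw [MvPowerSeries.coeff_mul]
    refine Finset.sum_eq_zero fun p hp => ?_
    have hpd : p.1 + p.2 = d := Finset.HasAntidiagonal.mem_antidiagonal.mp hp
    have h2 : deg p.2 < K := by
      have : p.2 ≤ d := by rw [← hpd]; exact le_add_left le_rfl
      exact lt_of_le_of_lt (deg_mono this) hd
    rw [hx p.2 h2, mul_zero]

lemma mem_vanishIdeal_iff {K : ℕ} {x : MvPowerSeries (Fin n) A} :
    x ∈ vanishIdeal A n K ↔ ∀ d : Fin n →₀ ℕ, deg d < K → coeff d x = 0 := Iff.rfl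

def mm (A : Type*) [CommRing A] (n : ℕ) : Ideal (MvPowerSeries (Fin n) A) :=
  Ideal.span (Set.range (X : Fin n → MvPowerSeries (Fin n) A))

lemma mm_pow_le_vanish (K : ℕ) : (mm A n) ^ K ≤ vanishIdeal A n K := by
  classical
  induction K with
  | zero => intro x _ d hd; omega
  | succ K ih =>
    rw [pow_succ]
    refine Ideal.mul_le.mpr fun r hr s hs d hd => ?_
    rw [MvPowerSeries.coeff_mul]
    refine Finset.sum_eq_zero fun p hp => ?_
    have hpd : p.1 + p.2 = d := Finset.HasAntidiagonal.mem_antidiagonal.mp hp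
    have hdegs : deg p.1 + deg p.2 < K + 1 := by rw [← deg_add, hpd]; exact hd
    rcases Nat.lt_or_ge (deg p.1) K with h1 | h1
    · rw [ih hr p.1 h1, zero_mul]
    · have h2 : deg p.2 < 1 := by omega
      have hs1 : s ∈ vanishIdeal A n 1 := by
        have : mm A n ≤ vanishIdeal A n 1 := by
          rw [mm, Ideal.span_le]
          rintro _ ⟨i, rfl⟩ d' hd'
          have : d' = 0 := deg_eq_zero_iff.mp (by omega)
          subst this
          rw [MvPowerSeries.coeff_X]
          have : (0 : Fin n →₀ ℕ) ≠ Finsupp.single i 1 := by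
            intro h
            have := deg_single i
            rw [← h] at this
            simp [deg] at this
          simp [this]
        exact this hs
      rw [hs1 p.2 h2, mul_zero]

lemma exists_le_deg_eq : ∀ (K : ℕ) (d : Fin n →₀ ℕ), K ≤ deg d →
    ∃ δ : Fin n →₀ ℕ, δ ≤ d ∧ deg δ = K := by
  intro K
  induction K with
  | zero => exact fun d _ => ⟨0, zero_le, by simp [deg]⟩
  | succ K ih =>
    intro d hd
    have hd0 : d ≠ 0 := by
      intro h; subst h; simp [deg] at hd
    have : ∃ i, d i ≠ 0 := by
      by_contra h
      push_neg at h
      exact hd0 (Finsupp.ext fun i => h i)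
    obtain ⟨i, hi⟩ := this
    have hle : Finsupp.single i 1 ≤ d := Finsupp.single_le_iff.mpr (by omega)
    have hsum : deg (d - Finsupp.single i 1) + 1 = deg d := by
      have : (d - Finsupp.single i 1) + Finsupp.single i 1 = d := tsub_add_cancel_of_le hle
      calc deg (d - Finsupp.single i 1) + 1
          = deg (d - Finsupp.single i 1) + deg (Finsupp.single i 1) := by rw [deg_single]
        _ = deg ((d - Finsupp.single i 1) + Finsupp.single i 1) := (deg_add _ _).symm
        _ = deg d := by rw [this]
    obtain ⟨δ', hδ'le, hδ'deg⟩ := ih (d - Finsupp.single i 1) (by omega)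
    refine ⟨δ' + Finsupp.single i 1, ?_, by rw [deg_add, hδ'deg, deg_single]⟩
    calc δ' + Finsupp.single i 1 ≤ (d - Finsupp.single i 1) + Finsupp.single i 1 :=
          add_le_add hδ'le le_rfl
      _ = d := tsub_add_cancel_of_le hle

lemma monomial_mem_mm_pow {K : ℕ} {δ : Fin n →₀ ℕ} (hδ : K ≤ deg δ) (a : A) :
    (MvPowerSeries.monomial δ) a ∈ (mm A n) ^ K := by
  classical
  induction K generalizing δ with
  | zero => simp
  | succ K ih =>
    have hδ0 : δ ≠ 0 := by
      intro h; subst h; simp [deg] at hδ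
    have : ∃ i, δ i ≠ 0 := by
      by_contra h
      push_neg at h
      exact hδ0 (Finsupp.ext fun i => h i)
    obtain ⟨i, hi⟩ := this
    have hle : Finsupp.single i 1 ≤ δ := Finsupp.single_le_iff.mpr (by omega)
    have hsplit : (MvPowerSeries.monomial δ) a
        = (X i : MvPowerSeries (Fin n) A) * (MvPowerSeries.monomial (δ - Finsupp.single i 1)) a := by
      rw [MvPowerSeries.X, MvPowerSeries.monomial_mul_monomial, one_mul,
        add_tsub_cancel_of_le hle]
    have hdeg' : K ≤ deg (δ - Finsupp.single i 1) := by
      have h1 : deg (δ - Finsupp.single i 1) + 1 = deg δ := by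
        have h2 : (δ - Finsupp.single i 1) + Finsupp.single i 1 = δ := tsub_add_cancel_of_le hle
        calc deg (δ - Finsupp.single i 1) + 1
            = deg (δ - Finsupp.single i 1) + deg (Finsupp.single i 1) := by rw [deg_single]
          _ = deg δ := by rw [← deg_add, h2]
      omega
    rw [hsplit, pow_succ']
    exact Ideal.mul_mem_mul (Ideal.subset_span (Set.mem_range_self i)) (ih hdeg')

lemma mem_mm_pow_of_vanish {K : ℕ} {x : MvPowerSeries (Fin n) A}
    (h : ∀ d : Fin n →₀ ℕ, deg d < K → coeff d x = 0) : x ∈ (mm A n) ^ K := by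
  classical
  set δsel : (Fin n →₀ ℕ) → (Fin n →₀ ℕ) := fun d =>
    if hd : K ≤ deg d then Classical.choose (exists_le_deg_eq K d hd) else 0 with hδsel
  have hδsel_spec : ∀ d : Fin n →₀ ℕ, K ≤ deg d → δsel d ≤ d ∧ deg (δsel d) = K := by
    intro d hd
    rw [hδsel]
    simp only [dif_pos hd]
    exact Classical.choose_spec (exists_le_deg_eq K d hd)
  set S : Finset (Fin n →₀ ℕ) := (Finset.Iic (bb n K)).filter (fun δ => deg δ = K) with hS
  have hmemS : ∀ δ : Fin n →₀ ℕ, deg δ = K → δ ∈ S := by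
    intro δ hδ
    rw [hS, Finset.mem_filter]
    refine ⟨Finset.mem_Iic.mpr (le_bb_iff.mpr fun i => ?_), hδ⟩
    rw [← hδ]; exact coord_le_deg δ i
  set hh : (Fin n →₀ ℕ) → MvPowerSeries (Fin n) A := fun δ =>
    (fun e => if δsel (e + δ) = δ then coeff (e + δ) x else 0) with hhh
  have key : x = ∑ δ ∈ S, (MvPowerSeries.monomial δ) 1 * hh δ := by
    apply MvPowerSeries.ext
    intro d
    rw [map_sum]
    rcases Nat.lt_or_ge (deg d) K with hd | hd
    · rw [h d hd]
      symm
      refine Finset.sum_eq_zero fun δ hδ => ?_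
      rw [MvPowerSeries.coeff_monomial_mul]
      split_ifs with hle
      · have : (d - δ) + δ = d := tsub_add_cancel_of_le hle
        show (1 : A) * (if δsel ((d - δ) + δ) = δ then coeff ((d - δ) + δ) x else 0) = 0
        rw [this]
        split_ifs with hsel
        · rw [h d hd, mul_zero]
        · rw [mul_zero]
      · rfl
    · obtain ⟨hle0, hdeg0⟩ := hδsel_spec d hd
      rw [Finset.sum_eq_single (δsel d)]
      · rw [MvPowerSeries.coeff_monomial_mul, if_pos hle0]
        have : (d - δsel d) + δsel d = d := tsub_add_cancel_of_le hle0
        show _ = (1:A) * (if δsel ((d - δsel d) + δsel d) = δsel d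
            then coeff ((d - δsel d) + δsel d) x else 0)
        rw [this, if_pos rfl, one_mul]
      · intro δ hδS hne
        rw [MvPowerSeries.coeff_monomial_mul]
        split_ifs with hle
        · have heq : (d - δ) + δ = d := tsub_add_cancel_of_le hle
          show (1 : A) * (if δsel ((d - δ) + δ) = δ then coeff ((d - δ) + δ) x else 0) = 0
          rw [heq, if_neg (fun hc => hne hc.symm)]
          · rw [mul_zero]
        · rfl
      · intro hnot
        exact absurd (hmemS (δsel d) hdeg0) hnot
  rw [key]
  refine Ideal.sum_mem _ fun δ hδ => ?_
  have hδK : deg δ = K := (Finset.mem_filter.mp hδ).2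
  exact Ideal.mul_mem_right _ _ (monomial_mem_mm_pow (le_of_eq hδK.symm) 1)


lemma vanish_of_mem_mm_pow {K : ℕ} {x : MvPowerSeries (Fin n) A} (hx : x ∈ (mm A n) ^ K) :
    ∀ d : Fin n →₀ ℕ, deg d < K → coeff d x = 0 :=
  mm_pow_le_vanish K hx

def mmP (A : Type*) [CommRing A] (n : ℕ) : Ideal (MvPolynomial (Fin n) A) :=
  Ideal.span (Set.range (MvPolynomial.X : Fin n → MvPolynomial (Fin n) A))

def JJ (f : Fin n → A) : Ideal (MvPowerSeries (Fin n) A) :=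
  Ideal.span (Set.range fun i : Fin n => C (σ := Fin n) (R := A) (f i) - X i)

def JP (f : Fin n → A) : Ideal (MvPolynomial (Fin n) A) :=
  Ideal.span (Set.range fun i : Fin n => MvPolynomial.C (f i) - MvPolynomial.X i)

lemma poly_monomial_mem {K : ℕ} {d : Fin n →₀ ℕ} (hd : K ≤ deg d) (a : A) :
    (MvPolynomial.monomial d) a ∈ (mmP A n) ^ K := by
  classical
  induction K generalizing d with
  | zero => simp
  | succ K ih =>
    have hδ0 : d ≠ 0 := by
      intro h; subst h
      rw [deg_eq_zero_iff.mpr rfl] at hd; omega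
    have : ∃ i, d i ≠ 0 := by
      by_contra h
      push_neg at h
      exact hδ0 (Finsupp.ext fun i => h i)
    obtain ⟨i, hi⟩ := this
    have hle : Finsupp.single i 1 ≤ d := Finsupp.single_le_iff.mpr (by omega)
    have hsplit : (MvPolynomial.monomial d) a
        = MvPolynomial.X i * (MvPolynomial.monomial (d - Finsupp.single i 1)) a := by
      rw [MvPolynomial.X, MvPolynomial.monomial_mul, one_mul, add_tsub_cancel_of_le hle]
    have hdeg' : K ≤ deg (d - Finsupp.single i 1) := by
      have h2 : (d - Finsupp.single i 1) + Finsupp.single i 1 = d := tsub_add_cancel_of_le hle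
      have h1 : deg (d - Finsupp.single i 1) + 1 = deg d := by
        conv_rhs => rw [← h2]
        rw [deg_add, deg_single]
      omega
    rw [hsplit, pow_succ']
    exact Ideal.mul_mem_mul (Ideal.subset_span (Set.mem_range_self i)) (ih hdeg')

lemma poly_mem_mmP_pow {K : ℕ} {p : MvPolynomial (Fin n) A}
    (h : ∀ d ∈ p.support, K ≤ deg d) : p ∈ (mmP A n) ^ K := by
  classical
  rw [MvPolynomial.as_sum p]
  exact Ideal.sum_mem _ fun d hd => poly_monomial_mem (h d hd) _

lemma coe_mem_mm_pow {k : ℕ} {B : MvPolynomial (Fin n) A} (hB : B ∈ (mmP A n) ^ k) :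
    (↑B : MvPowerSeries (Fin n) A) ∈ (mm A n) ^ k := by
  have h1 := Ideal.mem_map_of_mem (MvPolynomial.coeToMvPowerSeries.ringHom
    (σ := Fin n) (R := A)) hB
  rw [Ideal.map_pow] at h1
  have h2 : Ideal.map (MvPolynomial.coeToMvPowerSeries.ringHom (σ := Fin n) (R := A)) (mmP A n)
      ≤ mm A n := by
    rw [mmP, Ideal.map_span, Ideal.span_le]
    rintro _ ⟨_, ⟨i, rfl⟩, rfl⟩
    rw [MvPolynomial.coeToMvPowerSeries.ringHom_apply, MvPolynomial.coe_X]
    exact Ideal.subset_span (Set.mem_range_self i)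
  have h3 : (Ideal.map (MvPolynomial.coeToMvPowerSeries.ringHom (σ := Fin n) (R := A))
      (mmP A n)) ^ k ≤ (mm A n) ^ k := Ideal.pow_right_mono h2 k
  have h4 : ((MvPolynomial.coeToMvPowerSeries.ringHom (σ := Fin n) (R := A)) B
      : MvPowerSeries (Fin n) A) = ↑B := MvPolynomial.coeToMvPowerSeries.ringHom_apply B
  exact h3 (h4 ▸ h1)

-- truncation
def Tp (K : ℕ) (g : MvPowerSeries (Fin n) A) : MvPolynomial (Fin n) A :=
  ∑ d ∈ Finset.Iic (bb n K), MvPolynomial.monomial d (coeff d g)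

lemma coeff_Tp (K : ℕ) (g : MvPowerSeries (Fin n) A) (d : Fin n →₀ ℕ) :
    MvPolynomial.coeff d (Tp K g) = if d ≤ bb n K then coeff d g else 0 := by
  classical
  rw [Tp]
  rw [MvPolynomial.coeff_sum]
  split_ifs with hle
  · rw [Finset.sum_eq_single d]
    · rw [MvPolynomial.coeff_monomial, if_pos rfl]
    · intro e _ hne
      rw [MvPolynomial.coeff_monomial, if_neg hne]
    · intro hd
      exact absurd (Finset.mem_Iic.mpr hle) hd
  · refine Finset.sum_eq_zero fun e he => ?_
    rw [MvPolynomial.coeff_monomial]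
    have : e ≠ d := by
      intro h; subst h
      exact hle (Finset.mem_Iic.mp he)
    rw [if_neg this]

lemma support_Tp (K : ℕ) (g : MvPowerSeries (Fin n) A) :
    (Tp K g).support ⊆ Finset.Iic (bb n K) := by
  intro d hd
  rw [MvPolynomial.mem_support_iff, coeff_Tp] at hd
  by_contra hle
  rw [if_neg (fun h => hle (Finset.mem_Iic.mpr h))] at hd
  exact hd rfl

lemma aeval_Tp_eq_pe (K : ℕ) (g : MvPowerSeries (Fin n) A) :
    MvPolynomial.aeval f (Tp K g) = pe f K g := by
  classical
  rw [aeval_eq_sum, pe]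
  rw [Finset.sum_subset (support_Tp K g)]
  · refine Finset.sum_congr rfl fun d hd => ?_
    rw [coeff_Tp, if_pos (Finset.mem_Iic.mp hd)]
  · intro d _ hd
    rw [MvPolynomial.notMem_support_iff.mp hd, zero_mul]

lemma tail_vanish (K : ℕ) (g : MvPowerSeries (Fin n) A) {d : Fin n →₀ ℕ} (hd : deg d < K + 1) :
    coeff d (g - (↑(Tp K g) : MvPowerSeries (Fin n) A)) = 0 := by
  have hle : d ≤ bb n K := le_bb_iff.mpr fun i => by
    have := coord_le_deg d i; omega
  rw [map_sub, MvPolynomial.coeff_coe, coeff_Tp, if_pos hle, sub_self]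

-- J-side lemmas
lemma coe_sub_C_aeval_mem (p : MvPolynomial (Fin n) A) :
    (↑p : MvPowerSeries (Fin n) A) - C (σ := Fin n) (R := A) (MvPolynomial.aeval f p) ∈ JJ f := by
  set g₁ : MvPolynomial (Fin n) A →+* (MvPowerSeries (Fin n) A ⧸ JJ f) :=
    (Ideal.Quotient.mk (JJ f)).comp
      (MvPolynomial.coeToMvPowerSeries.ringHom (σ := Fin n) (R := A)) with hg₁
  set g₂ : MvPolynomial (Fin n) A →+* (MvPowerSeries (Fin n) A ⧸ JJ f) :=
    ((Ideal.Quotient.mk (JJ f)).comp (C (σ := Fin n) (R := A))).comp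
      (MvPolynomial.aeval f).toRingHom with hg₂
  have hg : g₁ = g₂ := by
    apply MvPolynomial.ringHom_ext
    · intro a
      rw [hg₁, hg₂]
      simp only [RingHom.coe_comp, Function.comp_apply,
        MvPolynomial.coeToMvPowerSeries.ringHom_apply, AlgHom.toRingHom_eq_coe,
        RingHom.coe_coe, MvPolynomial.aeval_C]
      rw [MvPolynomial.coe_C]
      norm_num
    · intro i
      rw [hg₁, hg₂]
      simp only [RingHom.coe_comp, Function.comp_apply,
        MvPolynomial.coeToMvPowerSeries.ringHom_apply, AlgHom.toRingHom_eq_coe,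
        RingHom.coe_coe, MvPolynomial.aeval_X]
      rw [MvPolynomial.coe_X]
      rw [Ideal.Quotient.mk_eq_mk_iff_sub_mem]
      have heq : (X i : MvPowerSeries (Fin n) A) - C (σ := Fin n) (R := A) (f i)
          = -(C (σ := Fin n) (R := A) (f i) - X i) := by ring
      rw [heq]
      exact neg_mem (Ideal.subset_span (Set.mem_range_self i))
  have happ : Ideal.Quotient.mk (JJ f) (↑p : MvPowerSeries (Fin n) A)
      = Ideal.Quotient.mk (JJ f) (C (σ := Fin n) (R := A) (MvPolynomial.aeval f p)) := by
    have h1 : g₁ p = g₂ p := by rw [hg]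
    rw [hg₁, hg₂] at h1
    simp only [RingHom.coe_comp, Function.comp_apply,
      MvPolynomial.coeToMvPowerSeries.ringHom_apply, AlgHom.toRingHom_eq_coe,
      RingHom.coe_coe] at h1
    exact h1
  rwa [Ideal.Quotient.mk_eq_mk_iff_sub_mem] at happ

lemma C_mem_sup {K : ℕ} {c : A} (hc : c ∈ Ideal.span (Set.range f) ^ K) :
    C (σ := Fin n) (R := A) c ∈ JJ f ⊔ (mm A n) ^ K := by
  classical
  induction K generalizing c with
  | zero =>
    refine Submodule.mem_sup_right ?_
    simp
  | succ K ih =>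
    rw [pow_succ] at hc
    refine Submodule.mul_induction_on hc ?_ ?_
    · intro x hx y hy
      obtain ⟨j, hj, u, hu, hju⟩ := Submodule.mem_sup.mp (ih hx)
      have hCy : C (σ := Fin n) (R := A) y ∈ JJ f ⊔ mm A n := by
        obtain ⟨r, hr⟩ := (Submodule.mem_span_range_iff_exists_fun A).mp hy
        rw [← hr]
        rw [map_sum]
        refine Submodule.sum_mem _ fun i _ => ?_
        have : C (σ := Fin n) (R := A) (r i • f i) = C (σ := Fin n) (R := A) (r i) * C (σ := Fin n) (R := A) (f i) := by
          rw [smul_eq_mul, map_mul]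
        rw [this]
        have hsplit : C (σ := Fin n) (R := A) (r i) * C (σ := Fin n) (R := A) (f i)
            = C (σ := Fin n) (R := A) (r i) * (C (σ := Fin n) (R := A) (f i) - X i) + C (σ := Fin n) (R := A) (r i) * X i := by
          ring
        rw [hsplit]
        refine Submodule.add_mem _ ?_ ?_
        · exact Submodule.mem_sup_left
            (Ideal.mul_mem_left _ _ (Ideal.subset_span (Set.mem_range_self i)))
        · exact Submodule.mem_sup_right
            (Ideal.mul_mem_left _ _ (Ideal.subset_span (Set.mem_range_self i)))
      obtain ⟨j', hj', v, hv, hjv⟩ := Submodule.mem_sup.mp hCy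
      have hxy : C (σ := Fin n) (R := A) (x * y) = j * (j' + v) + u * j' + u * v := by
        rw [map_mul, ← hju, ← hjv]; ring
      rw [hxy]
      refine Submodule.add_mem _ (Submodule.add_mem _ ?_ ?_) ?_
      · exact Submodule.mem_sup_left (Ideal.mul_mem_right _ _ hj)
      · exact Submodule.mem_sup_left (Ideal.mul_mem_left _ _ hj')
      · exact Submodule.mem_sup_right (Ideal.mul_mem_mul hu hv)
    · intro x y hx hy
      rw [map_add]
      exact Submodule.add_mem _ hx hy


lemma pe_sum {ι : Type*} (K : ℕ) (s : Finset ι) (g : ι → MvPowerSeries (Fin n) A) :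
    pe f K (∑ i ∈ s, g i) = ∑ i ∈ s, pe f K (g i) := by
  simp only [pe, map_sum, Finset.sum_mul]
  exact Finset.sum_comm

theorem psiHom_surjective : Function.Surjective (psiHom f) := by
  classical
  intro x
  obtain ⟨a, rfl⟩ := AdicCompletion.mk_surjective (Ideal.span (Set.range f)) A x
  have hstep : ∀ k : ℕ, (a (k + 1) : A) - a k ∈ Ideal.span (Set.range f) ^ k := by
    intro k
    have h := AdicCompletion.AdicCauchySequence.mk_eq_mk (Nat.le_succ k) a
    rw [Submodule.Quotient.eq] at h
    rwa [smul_top_eq] at h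
  choose p hp hdeg using fun k => exists_poly_rep f (hstep k)
  set p' : ℕ → MvPolynomial (Fin n) A :=
    fun k => if k = 0 then MvPolynomial.C (a 1) else p k with hp'
  have hdeg' : ∀ k, ∀ d ∈ (p' k).support, k ≤ deg d := by
    intro k d hd
    rcases Nat.eq_zero_or_pos k with rfl | hk
    · exact Nat.zero_le _
    · rw [hp'] at hd
      simp only [Nat.pos_iff_ne_zero.mp hk, if_neg (Nat.pos_iff_ne_zero.mp hk)] at hd
      exact hdeg k d hd
  have hvanish : ∀ k (d : Fin n →₀ ℕ), deg d < k →
      coeff d ((p' k : MvPolynomial (Fin n) A) : MvPowerSeries (Fin n) A) = 0 := by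
    intro k d h
    rw [MvPolynomial.coeff_coe]
    by_contra h0
    exact absurd (hdeg' k d (MvPolynomial.mem_support_iff.mpr h0)) (by omega)
  have haP : ∀ T : ℕ, MvPolynomial.aeval f (∑ k ∈ Finset.range (T + 1), p' k) = a (T + 1) := by
    intro T
    induction T with
    | zero => simp [hp']
    | succ T ih =>
      rw [Finset.sum_range_succ, map_add, ih, hp']
      simp only [if_neg (Nat.succ_ne_zero T)]
      rw [hp (T + 1)]
      ring
  refine ⟨seqSum (fun k => ((p' k : MvPolynomial (Fin n) A) : MvPowerSeries (Fin n) A)), ?_⟩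
  apply AdicCompletion.ext
  intro K
  rw [psiHom_val]
  set T := max (n * K + 1) (K + 1) with hT
  obtain ⟨S, hS⟩ : ∃ S, T = S + 1 := ⟨T - 1, by omega⟩
  have h1 : pe f K (seqSum (fun k => ((p' k : MvPolynomial (Fin n) A) : MvPowerSeries (Fin n) A)))
      = pe f K (∑ k ∈ Finset.range T, ((p' k : MvPolynomial (Fin n) A) : MvPowerSeries (Fin n) A)) :=
    pe_congr f fun d hd => coeff_seqSum_eq_partial _ hvanish
      (lt_of_le_of_lt (deg_le_of_le_bb hd) (by omega))
  have h2 : pe f K (∑ k ∈ Finset.range T, ((p' k : MvPolynomial (Fin n) A) : MvPowerSeries (Fin n) A))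
      - ∑ k ∈ Finset.range T, MvPolynomial.aeval f (p' k) ∈ Ideal.span (Set.range f) ^ K := by
    rw [pe_sum, ← Finset.sum_sub_distrib]
    exact Ideal.sum_mem _ fun k _ => pe_coe_sub_aeval_mem f K (p' k)
  have h3 : (∑ k ∈ Finset.range T, MvPolynomial.aeval f (p' k)) = a T := by
    rw [hS, ← haP S, map_sum]
  have h4 : (a T : A) - a K ∈ Ideal.span (Set.range f) ^ K := by
    have h := AdicCompletion.AdicCauchySequence.mk_eq_mk (show K ≤ T by omega) a
    rw [Submodule.Quotient.eq] at h
    rwa [smul_top_eq] at h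
  show _ = (AdicCompletion.mk (Ideal.span (Set.range f)) A a).val K
  rw [AdicCompletion.mk_apply_coe, Submodule.mkQ_apply, Submodule.Quotient.eq, smul_top_eq]
  have heq : pe f K (seqSum fun k => ((p' k : MvPolynomial (Fin n) A) : MvPowerSeries (Fin n) A)) - a K
      = (pe f K (∑ k ∈ Finset.range T, ((p' k : MvPolynomial (Fin n) A) : MvPowerSeries (Fin n) A))
        - ∑ k ∈ Finset.range T, MvPolynomial.aeval f (p' k)) + ((a T : A) - a K) := by
    rw [h1, h3]; ring
  rw [heq]
  exact add_mem h2 h4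


lemma coe_lincomb (u : Fin n → MvPolynomial (Fin n) A) :
    (((∑ i, (MvPolynomial.C (f i) - MvPolynomial.X i) * u i : MvPolynomial (Fin n) A) :
      MvPowerSeries (Fin n) A))
      = ∑ i, (C (σ := Fin n) (R := A) (f i) - X i) * (↑(u i) : MvPowerSeries (Fin n) A) := by
  rw [← MvPolynomial.coeToMvPowerSeries.ringHom_apply, map_sum]
  refine Finset.sum_congr rfl fun i _ => ?_
  rw [map_mul, map_sub]
  simp only [MvPolynomial.coeToMvPowerSeries.ringHom_apply, MvPolynomial.coe_C,
    MvPolynomial.coe_X]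

lemma mem_sup_of_pe_mem {K : ℕ} {g : MvPowerSeries (Fin n) A}
    (hK : pe f K g ∈ Ideal.span (Set.range f) ^ K) : g ∈ JJ f ⊔ (mm A n) ^ K := by
  have hsplit : g = (g - ↑(Tp K g))
      + ((↑(Tp K g) : MvPowerSeries (Fin n) A) - C (σ := Fin n) (R := A) (MvPolynomial.aeval f (Tp K g)))
      + C (σ := Fin n) (R := A) (pe f K g) := by
    rw [aeval_Tp_eq_pe]; ring
  rw [hsplit]
  refine Submodule.add_mem _ (Submodule.add_mem _ ?_ ?_) ?_
  · exact Submodule.mem_sup_right (mem_mm_pow_of_vanish fun d hd =>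
      tail_vanish K g (by omega))
  · exact Submodule.mem_sup_left (coe_sub_C_aeval_mem f _)
  · exact C_mem_sup f hK

theorem mem_JJ_of_forall_sup [IsNoetherianRing A] {g : MvPowerSeries (Fin n) A}
    (h : ∀ K, g ∈ JJ f ⊔ (mm A n) ^ K) : g ∈ JJ f := by
  classical
  obtain ⟨c, hAR⟩ := Ideal.exists_pow_inf_eq_pow_smul (mmP A n) (JP f : Ideal (MvPolynomial (Fin n) A))
  have smul_topP : ∀ K : ℕ, ((mmP A n) ^ K • ⊤ : Ideal (MvPolynomial (Fin n) A)) = (mmP A n) ^ K := by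
    intro K; ext x; simp
  -- Artin-Rees-type representation in the power series ring
  have hARR : ∀ K, c ≤ K → ∀ x : MvPowerSeries (Fin n) A, x ∈ JJ f → x ∈ (mm A n) ^ K →
      ∃ b : Fin n → MvPowerSeries (Fin n) A, (∀ i, b i ∈ (mm A n) ^ (K - c)) ∧
        x = ∑ i, (C (σ := Fin n) (R := A) (f i) - X i) * b i := by
    intro K hK x hxJ hxm
    obtain ⟨h', hh'⟩ := (Submodule.mem_span_range_iff_exists_fun _).mp hxJ
    set u : Fin n → MvPolynomial (Fin n) A := fun i => Tp K (h' i) with hu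
    set w : Fin n → MvPowerSeries (Fin n) A := fun i => h' i - ↑(u i) with hw
    have hwm : ∀ i, w i ∈ (mm A n) ^ (K + 1) := fun i =>
      mem_mm_pow_of_vanish fun d hd => tail_vanish K (h' i) hd
    set y : MvPowerSeries (Fin n) A := ∑ i, (C (σ := Fin n) (R := A) (f i) - X i) * (↑(u i) : MvPowerSeries (Fin n) A) with hy
    set z : MvPowerSeries (Fin n) A := ∑ i, (C (σ := Fin n) (R := A) (f i) - X i) * w i with hz
    have hxyz : x = y + z := by
      rw [← hh', hy, hz, ← Finset.sum_add_distrib]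
      refine Finset.sum_congr rfl fun i _ => ?_
      rw [hw]
      simp only [smul_eq_mul]
      ring
    have hzm : z ∈ (mm A n) ^ (K + 1) := by
      rw [hz]
      exact Ideal.sum_mem _ fun i _ => Ideal.mul_mem_left _ _ (hwm i)
    have hym : y ∈ (mm A n) ^ K := by
      have : y = x - z := by rw [hxyz]; ring
      rw [this]
      exact Submodule.sub_mem _ hxm (Ideal.pow_le_pow_right (by omega) hzm)
    set yP : MvPolynomial (Fin n) A := ∑ i, (MvPolynomial.C (f i) - MvPolynomial.X i) * u i with hyP
    have hyP_coe : (↑yP : MvPowerSeries (Fin n) A) = y := by rw [hyP, coe_lincomb]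
    have hyP_J : yP ∈ JP f := by
      rw [hyP]
      exact Ideal.sum_mem _ fun i _ =>
        Ideal.mul_mem_right _ _ (Ideal.subset_span (Set.mem_range_self i))
    have hyP_m : yP ∈ (mmP A n) ^ K := by
      refine poly_mem_mmP_pow fun d hd => ?_
      by_contra hdeg
      have h0 : coeff d (↑yP : MvPowerSeries (Fin n) A) = 0 := by
        rw [hyP_coe]
        exact vanish_of_mem_mm_pow hym d (by omega)
      rw [MvPolynomial.coeff_coe] at h0
      exact (MvPolynomial.mem_support_iff.mp hd) h0
    have hyP_in : yP ∈ (mmP A n) ^ (K - c) • (JP f : Submodule (MvPolynomial (Fin n) A) (MvPolynomial (Fin n) A)) := by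
      have h1 : yP ∈ ((mmP A n) ^ K • ⊤ ⊓ (JP f) : Submodule (MvPolynomial (Fin n) A) (MvPolynomial (Fin n) A)) := by
        refine Submodule.mem_inf.mpr ⟨?_, hyP_J⟩
        show yP ∈ ((mmP A n) ^ K • ⊤ : Ideal (MvPolynomial (Fin n) A))
        rw [smul_topP]
        exact hyP_m
      rw [hAR K hK] at h1
      exact Submodule.smul_mono le_rfl inf_le_right h1
    have hext : ∃ B : Fin n → MvPolynomial (Fin n) A, (∀ i, B i ∈ (mmP A n) ^ (K - c)) ∧
        yP = ∑ i, (MvPolynomial.C (f i) - MvPolynomial.X i) * B i := by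
      refine Submodule.smul_induction_on hyP_in ?_ ?_
      · intro r hr nn hnn
        obtain ⟨cc, hcc⟩ := (Submodule.mem_span_range_iff_exists_fun _).mp hnn
        refine ⟨fun i => r * cc i, fun i => Ideal.mul_mem_right _ _ hr, ?_⟩
        rw [smul_eq_mul, ← hcc, Finset.mul_sum]
        refine Finset.sum_congr rfl fun i _ => ?_
        simp only [smul_eq_mul]
        ring
      · rintro x₁ x₂ ⟨B₁, hB₁, hx₁⟩ ⟨B₂, hB₂, hx₂⟩
        refine ⟨fun i => B₁ i + B₂ i, fun i => Submodule.add_mem _ (hB₁ i) (hB₂ i), ?_⟩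
        rw [hx₁, hx₂, ← Finset.sum_add_distrib]
        refine Finset.sum_congr rfl fun i _ => by ring
    obtain ⟨B, hBmem, hyPB⟩ := hext
    refine ⟨fun i => (↑(B i) : MvPowerSeries (Fin n) A) + w i, fun i => ?_, ?_⟩
    · refine Submodule.add_mem _ (coe_mem_mm_pow (hBmem i)) ?_
      exact Ideal.pow_le_pow_right (by omega) (hwm i)
    · have hyB : y = ∑ i, (C (σ := Fin n) (R := A) (f i) - X i) * (↑(B i) : MvPowerSeries (Fin n) A) := by
        rw [← hyP_coe, hyPB, coe_lincomb]
      rw [hxyz, hyB, hz, ← Finset.sum_add_distrib]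
      refine Finset.sum_congr rfl fun i _ => by ring
  -- main argument
  choose j hj r hr hjr using fun K => Submodule.mem_sup.mp (h K)
  have hjg : ∀ K, j K = g - r K := fun K => eq_sub_of_add_eq (hjr K)
  have hdJ : ∀ t : ℕ, j (t + c + 1) - j (t + c) ∈ JJ f := fun t => Submodule.sub_mem _ (hj _) (hj _)
  have hdm : ∀ t : ℕ, j (t + c + 1) - j (t + c) ∈ (mm A n) ^ (t + c) := by
    intro t
    have : j (t + c + 1) - j (t + c) = r (t + c) - r (t + c + 1) := by
      rw [hjg, hjg]; ring
    rw [this]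
    exact Submodule.sub_mem _ (hr _) (Ideal.pow_le_pow_right (by omega) (hr _))
  choose b hbmem hbeq using fun t : ℕ => hARR (t + c) (by omega) _ (hdJ t) (hdm t)
  have hbmem' : ∀ t i, b t i ∈ (mm A n) ^ t := by
    intro t i
    have := hbmem t i
    rwa [Nat.add_sub_cancel] at this
  obtain ⟨q, hq⟩ := (Submodule.mem_span_range_iff_exists_fun _).mp (hj c)
  -- telescoping
  have htel : ∀ T : ℕ, j c + ∑ t ∈ Finset.range T, (j (t + c + 1) - j (t + c)) = j (T + c) := by
    intro T
    induction T with
    | zero => simp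
    | succ T ih =>
      rw [Finset.sum_range_succ, ← add_assoc, ih]
      have : T + c + 1 = T + 1 + c := by omega
      rw [← this]
      ring
  -- the identity g = ∑ i, gen i * (q i + seqSum (b · i))
  have hvanish : ∀ i, ∀ k (d : Fin n →₀ ℕ), deg d < k → coeff d (b k i) = 0 := by
    intro i k d hd
    exact vanish_of_mem_mm_pow (hbmem' k i) d hd
  have hgeq : g = ∑ i, (C (σ := Fin n) (R := A) (f i) - X i) * (q i + seqSum (fun t => b t i)) := by
    apply MvPowerSeries.ext
    intro d
    set T := deg d + 1 with hT
    have hstep1 : coeff d (∑ i, (C (σ := Fin n) (R := A) (f i) - X i) * (q i + seqSum (fun t => b t i)))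
        = coeff d (∑ i, (C (σ := Fin n) (R := A) (f i) - X i) * (q i + ∑ t ∈ Finset.range T, b t i)) := by
      rw [map_sum, map_sum]
      refine Finset.sum_congr rfl fun i _ => ?_
      rw [MvPowerSeries.coeff_mul, MvPowerSeries.coeff_mul]
      refine Finset.sum_congr rfl fun p hp => ?_
      have hp2 : p.2 ≤ d := by
        have := Finset.HasAntidiagonal.mem_antidiagonal.mp hp
        rw [← this]; exact le_add_left le_rfl
      have hdeg2 : deg p.2 < T := by
        have := deg_mono hp2; omega
      congr 1
      rw [map_add, map_add]
      congr 1
      exact coeff_seqSum_eq_partial _ (hvanish i) hdeg2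
    have hsum_eq : (∑ i, (C (σ := Fin n) (R := A) (f i) - X i) * (q i + ∑ t ∈ Finset.range T, b t i))
        = j (T + c) := by
      have expand : (∑ i, (C (σ := Fin n) (R := A) (f i) - X i) * (q i + ∑ t ∈ Finset.range T, b t i))
          = (∑ i, (C (σ := Fin n) (R := A) (f i) - X i) * q i)
            + ∑ t ∈ Finset.range T, ∑ i, (C (σ := Fin n) (R := A) (f i) - X i) * b t i := by
        simp only [mul_add, Finset.mul_sum, Finset.sum_add_distrib]
        rw [Finset.sum_comm]
      rw [expand]
      have h1 : (∑ i, (C (σ := Fin n) (R := A) (f i) - X i) * q i) = j c := by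
        rw [← hq]
        exact Finset.sum_congr rfl fun i _ => by rw [smul_eq_mul]; ring
      have h2 : ∀ t ∈ Finset.range T, (∑ i, (C (σ := Fin n) (R := A) (f i) - X i) * b t i)
          = j (t + c + 1) - j (t + c) := fun t _ => (hbeq t).symm
      rw [h1, Finset.sum_congr rfl h2, htel T]
    rw [hstep1, hsum_eq]
    rw [hjg (T + c)]
    have : coeff d (r (T + c)) = 0 := vanish_of_mem_mm_pow (hr (T + c)) d (by omega)
    rw [map_sub, this, sub_zero]
  rw [hgeq]
  exact Ideal.sum_mem _ fun i _ =>
    Ideal.mul_mem_right _ _ (Ideal.subset_span (Set.mem_range_self i))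


end
end Stmt4Aux

/-- For a Noetherian commutative ring `A` and the ideal `I = (f₁, …, fₙ)`, the `I`-adic
completion of `A` is isomorphic as an `A`-algebra to `A[[ρ₁, …, ρₙ]] / (fᵢ - ρᵢ)`. -/
theorem stmt_4 (A : Type*) [CommRing A] [IsNoetherianRing A] (n : ℕ) (f : Fin n → A) :
    Nonempty
      (AdicCompletion (Ideal.span (Set.range f)) A ≃ₐ[A]
        (MvPowerSeries (Fin n) A ⧸
          Ideal.span (Set.range fun i : Fin n =>
            MvPowerSeries.C (σ := Fin n) (R := A) (f i) - MvPowerSeries.X i))) := by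
  classical
  open Stmt4Aux in
  have hgen : ∀ i : Fin n, Stmt4Aux.psiHom f
      (MvPowerSeries.C (σ := Fin n) (R := A) (f i) - MvPowerSeries.X i) = 0 := by
    intro i
    apply AdicCompletion.ext
    intro K
    rw [Stmt4Aux.psiHom_val]
    have hco : (MvPowerSeries.C (σ := Fin n) (R := A) (f i) - MvPowerSeries.X i)
        = ((MvPolynomial.C (f i) - MvPolynomial.X i : MvPolynomial (Fin n) A) :
            MvPowerSeries (Fin n) A) := by
      rw [← MvPolynomial.coeToMvPowerSeries.ringHom_apply, map_sub,
        MvPolynomial.coeToMvPowerSeries.ringHom_apply, MvPolynomial.coe_C,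
        MvPolynomial.coeToMvPowerSeries.ringHom_apply, MvPolynomial.coe_X]
    have haev : MvPolynomial.aeval f
        ((MvPolynomial.C (f i) - MvPolynomial.X i : MvPolynomial (Fin n) A)) = 0 := by
      rw [map_sub, MvPolynomial.aeval_C, MvPolynomial.aeval_X]
      simp
    have hmem : Stmt4Aux.pe f K (MvPowerSeries.C (σ := Fin n) (R := A) (f i) - MvPowerSeries.X i)
        ∈ Ideal.span (Set.range f) ^ K := by
      have := Stmt4Aux.pe_coe_sub_aeval_mem f K
        ((MvPolynomial.C (f i) - MvPolynomial.X i : MvPolynomial (Fin n) A))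
      rw [haev, sub_zero, ← hco] at this
      exact this
    have : (0 : AdicCompletion (Ideal.span (Set.range f)) A).val K = 0 := rfl
    rw [this, Submodule.Quotient.mk_eq_zero]
    rwa [← Stmt4Aux.smul_top_eq f K] at hmem
  have hker : ∀ a ∈ Ideal.span (Set.range fun i : Fin n =>
      MvPowerSeries.C (σ := Fin n) (R := A) (f i) - MvPowerSeries.X i), Stmt4Aux.psiHom f a = 0 := by
    intro a ha
    have hle : Ideal.span (Set.range fun i : Fin n =>
        MvPowerSeries.C (σ := Fin n) (R := A) (f i) - MvPowerSeries.X i)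
        ≤ RingHom.ker (Stmt4Aux.psiHom f).toRingHom := by
      rw [Ideal.span_le]
      rintro _ ⟨i, rfl⟩
      exact RingHom.mem_ker.mpr (hgen i)
    exact RingHom.mem_ker.mp (hle ha)
  set Φ := Ideal.Quotient.liftₐ _ (Stmt4Aux.psiHom f) hker with hΦ
  have hsurj : Function.Surjective Φ := by
    intro x
    obtain ⟨g, hg⟩ := Stmt4Aux.psiHom_surjective f x
    refine ⟨Ideal.Quotient.mk _ g, ?_⟩
    rw [hΦ]
    exact hg
  have hinj : Function.Injective Φ := by
    rw [injective_iff_map_eq_zero]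
    intro a ha
    obtain ⟨g, rfl⟩ := Ideal.Quotient.mk_surjective a
    rw [hΦ] at ha
    have ha' : Stmt4Aux.psiHom f g = 0 := ha
    have hpe : ∀ K, Stmt4Aux.pe f K g ∈ Ideal.span (Set.range f) ^ K := by
      intro K
      have h0 : (Stmt4Aux.psiHom f g).val K
          = (0 : AdicCompletion (Ideal.span (Set.range f)) A).val K := by rw [ha']
      rw [Stmt4Aux.psiHom_val] at h0
      have h1 : (0 : AdicCompletion (Ideal.span (Set.range f)) A).val K = 0 := rfl
      rw [h1, Submodule.Quotient.mk_eq_zero] at h0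
      rwa [Stmt4Aux.smul_top_eq f K] at h0
    have hgJ : g ∈ Stmt4Aux.JJ f :=
      Stmt4Aux.mem_JJ_of_forall_sup f fun K => Stmt4Aux.mem_sup_of_pe_mem f (hpe K)
    exact Ideal.Quotient.eq_zero_iff_mem.mpr hgJ
  exact ⟨(AlgEquiv.ofBijective Φ ⟨hinj, hsurj⟩).symm⟩
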